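/- Let τ1, τ2, κ, μ > 0 and let p̃, ẽ, s̃ : (0,∞)×(0,∞) → ℝ be C¹ functions satisfying ∂_v s̃(v,θ) = ∂_θ p̃(v,θ), ∂_θ s̃(v,θ) = (1/θ)∂_θ ẽ(v,θ), and ∂_v ẽ(v,θ) = θ ∂_θ p̃(v,θ) − p̃(v,θ) for all v, θ > 0. Suppose (v,u,θ,q,S) are C¹ real-valued functions of (t,x) on an open subset U of ℝ², with v > 0 and θ > 0 and ∂_θ ẽ(v,θ) − τ1 v q²/(κθ²) > 0 pointwise on U, which satisfy on U the hyperbolic Navier–Stokes system ∂_t v − ∂_x u = 0; ∂_t u + ∂_x p = ∂_x S; ∂_t(e + u²/2) + ∂_x(u p) + ∂_x q = ∂_x(u S); τ1 ∂_t q + q + κ ∂_x θ / v = 0; τ2 ∂_t S + S = μ ∂_x u / v, where p = p̃(v,θ) − τ1 q²/(2κθ) − τ2 S²/(2μ) and e = ẽ(v,θ) + τ1 v q²/(κθ) + τ2 v S²/(2μ). Then the entropy s := s̃(v,θ) + τ1 v q²/(2κθ²) satisfies, pointwise on U, the identity ∂_t s + ∂_x(q/θ) = v q²/(κθ²) + v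 S²/(μθ). -/

import Mathlib

/-- Partial derivative in the first variable (time t, or volume v). -/
noncomputable def d1 (f : ℝ × ℝ → ℝ) (y : ℝ × ℝ) : ℝ := fderiv ℝ f y (1, 0)

/-- Partial derivative in the second variable (space x, or temperature θ). -/
noncomputable def d2 (f : ℝ × ℝ → ℝ) (y : ℝ × ℝ) : ℝ := fderiv ℝ f y (0, 1)

lemma pairEval (L : ℝ × ℝ →L[ℝ] ℝ) (a b : ℝ) : L (a, b) = a * L (1, 0) + b * L (0, 1) := by
  have h : ((a, b) : ℝ × ℝ) = a • ((1:ℝ), (0:ℝ)) + b • ((0:ℝ), (1:ℝ)) := by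
    simp [Prod.ext_iff]
  rw [h, map_add, map_smul, map_smul, smul_eq_mul, smul_eq_mul]

lemma compProdApply (L : ℝ × ℝ →L[ℝ] ℝ) (A B : ℝ × ℝ →L[ℝ] ℝ) (w : ℝ × ℝ) :
    (L.comp (A.prod B)) w = A w * L (1, 0) + B w * L (0, 1) := by
  rw [ContinuousLinearMap.comp_apply, ContinuousLinearMap.prod_apply, pairEval]

lemma fold_d1 (f : ℝ × ℝ → ℝ) (x : ℝ × ℝ) : (fderiv ℝ f x) (1, 0) = d1 f x := rfl
lemma fold_d2 (f : ℝ × ℝ → ℝ) (x : ℝ × ℝ) : (fderiv ℝ f x) (0, 1) = d2 f x := rfl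

lemma hasFDerivAt_sq {f : ℝ × ℝ → ℝ} {f' : ℝ × ℝ →L[ℝ] ℝ} {x : ℝ × ℝ}
    (hf : HasFDerivAt f f' x) :
    HasFDerivAt (fun y => (f y) ^ 2) ((2 * f x) • f') x := by
  have h := hf.mul hf
  have he : (fun y => f y * f y) = fun y => (f y) ^ 2 := by funext z; ring
  rw [show (f * f) = fun y => (f y) ^ 2 from he] at h
  refine h.congr_fderiv ?_
  rw [two_mul, add_smul]

lemma hasFDerivAt_div' {f g : ℝ × ℝ → ℝ} {f' g' : ℝ × ℝ →L[ℝ] ℝ} {x : ℝ × ℝ}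
    (hf : HasFDerivAt f f' x) (hg : HasFDerivAt g g' x) (h0 : g x ≠ 0) :
    HasFDerivAt (fun y => f y / g y)
      (f x • ((-((g x) ^ 2)⁻¹) • g') + (g x)⁻¹ • f') x := by
  have hinv : HasFDerivAt (fun y => (g y)⁻¹) ((-((g x) ^ 2)⁻¹) • g') x :=
    (hasDerivAt_inv h0).comp_hasFDerivAt x hg
  have h := hf.mul hinv
  simpa only [div_eq_mul_inv, Pi.mul_def] using h

lemma d1_eq {f : ℝ × ℝ → ℝ} {f' : ℝ × ℝ →L[ℝ] ℝ} {x : ℝ × ℝ} (h : HasFDerivAt f f' x) :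
    d1 f x = f' (1, 0) := by rw [d1, h.fderiv]

lemma d2_eq {f : ℝ × ℝ → ℝ} {f' : ℝ × ℝ →L[ℝ] ℝ} {x : ℝ × ℝ} (h : HasFDerivAt f f' x) :
    d2 f x = f' (0, 1) := by rw [d2, h.fderiv]

set_option maxHeartbeats 4000000 in
/-- for C¹ solutions of the one-dimensional hyperbolic Navier–Stokes
system with Gibbs-compatible constitutive functions, the entropy
s = s̃(v,θ) + τ1 v q²/(2κθ²) satisfies
∂_t s + ∂_x(q/θ) = v q²/(κθ²) + v S²/(μθ). -/
theorem entropy_equation_hyperbolic_NS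
    (τ1 τ2 κ μ : ℝ) (hτ1 : 0 < τ1) (hτ2 : 0 < τ2) (hκ : 0 < κ) (hμ : 0 < μ)
    (pt et st : ℝ × ℝ → ℝ)
    (hpt : ContDiffOn ℝ 1 pt {y : ℝ × ℝ | 0 < y.1 ∧ 0 < y.2})
    (het : ContDiffOn ℝ 1 et {y : ℝ × ℝ | 0 < y.1 ∧ 0 < y.2})
    (hst : ContDiffOn ℝ 1 st {y : ℝ × ℝ | 0 < y.1 ∧ 0 < y.2})
    (hGibbs1 : ∀ y : ℝ × ℝ, 0 < y.1 → 0 < y.2 → d1 st y = d2 pt y)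
    (hGibbs2 : ∀ y : ℝ × ℝ, 0 < y.1 → 0 < y.2 → d2 st y = (1 / y.2) * d2 et y)
    (hGibbs3 : ∀ y : ℝ × ℝ, 0 < y.1 → 0 < y.2 → d1 et y = y.2 * d2 pt y - pt y)
    (U : Set (ℝ × ℝ)) (hU : IsOpen U)
    (v u θ q S : ℝ × ℝ → ℝ)
    (hv : ContDiffOn ℝ 1 v U) (hu : ContDiffOn ℝ 1 u U)
    (hθ : ContDiffOn ℝ 1 θ U) (hq : ContDiffOn ℝ 1 q U) (hS : ContDiffOn ℝ 1 S U)
    (hvpos : ∀ y ∈ U, 0 < v y) (hθpos : ∀ y ∈ U, 0 < θ y)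
    (heθpos : ∀ y ∈ U,
      0 < d2 et (v y, θ y) - τ1 * v y * (q y) ^ 2 / (κ * (θ y) ^ 2))
    (hmass : ∀ y ∈ U, d1 v y - d2 u y = 0)
    (hmom : ∀ y ∈ U,
      d1 u y
        + d2 (fun y' => pt (v y', θ y') - τ1 * (q y') ^ 2 / (2 * κ * θ y')
            - τ2 * (S y') ^ 2 / (2 * μ)) y
      = d2 S y)
    (henergy : ∀ y ∈ U,
      d1 (fun y' => (et (v y', θ y') + τ1 * v y' * (q y') ^ 2 / (κ * θ y')
            + τ2 * v y' * (S y') ^ 2 / (2 * μ)) + (u y') ^ 2 / 2) y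
        + d2 (fun y' => u y' * (pt (v y', θ y') - τ1 * (q y') ^ 2 / (2 * κ * θ y')
            - τ2 * (S y') ^ 2 / (2 * μ))) y
        + d2 q y
      = d2 (fun y' => u y' * S y') y)
    (hcattaneo : ∀ y ∈ U, τ1 * d1 q y + q y + κ * d2 θ y / v y = 0)
    (hmaxwell : ∀ y ∈ U, τ2 * d1 S y + S y = μ * d2 u y / v y) :
    ∀ y ∈ U,
      d1 (fun y' => st (v y', θ y') + τ1 * v y' * (q y') ^ 2 / (2 * κ * (θ y') ^ 2)) y
        + d2 (fun y' => q y' / θ y') y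
      = v y * (q y) ^ 2 / (κ * (θ y) ^ 2) + v y * (S y) ^ 2 / (μ * θ y) := by
  intro y hy
  have hvy := hvpos y hy
  have hθy := hθpos y hy
  have hv0 : v y ≠ 0 := ne_of_gt hvy
  have hθ0 : θ y ≠ 0 := ne_of_gt hθy
  have hκ0 : κ ≠ 0 := ne_of_gt hκ
  have hμ0 : μ ≠ 0 := ne_of_gt hμ
  have hτ10 : τ1 ≠ 0 := ne_of_gt hτ1
  have hτ20 : τ2 ≠ 0 := ne_of_gt hτ2
  have h2κθ : 2 * κ * θ y ≠ 0 := by positivity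
  have hκθ : κ * θ y ≠ 0 := by positivity
  have h2μ : (2 * μ : ℝ) ≠ 0 := by positivity
  have h20 : (2 : ℝ) ≠ 0 := by norm_num
  have h2κθ2 : 2 * κ * (θ y) ^ 2 ≠ 0 := by positivity
  have hopen : IsOpen {p : ℝ × ℝ | 0 < p.1 ∧ 0 < p.2} :=
    (isOpen_lt continuous_const continuous_fst).inter (isOpen_lt continuous_const continuous_snd)
  have hUy : U ∈ nhds y := hU.mem_nhds hy
  have hzmem : ((v y, θ y) : ℝ × ℝ) ∈ {p : ℝ × ℝ | 0 < p.1 ∧ 0 < p.2} := ⟨hvy, hθy⟩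
  have hznhds : {p : ℝ × ℝ | 0 < p.1 ∧ 0 < p.2} ∈ nhds ((v y, θ y) : ℝ × ℝ) :=
    hopen.mem_nhds hzmem
  have Hv : HasFDerivAt v (fderiv ℝ v y) y :=
    ((hv.differentiableOn one_ne_zero).differentiableAt hUy).hasFDerivAt
  have Hu : HasFDerivAt u (fderiv ℝ u y) y :=
    ((hu.differentiableOn one_ne_zero).differentiableAt hUy).hasFDerivAt
  have Hθ : HasFDerivAt θ (fderiv ℝ θ y) y :=
    ((hθ.differentiableOn one_ne_zero).differentiableAt hUy).hasFDerivAt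
  have Hq : HasFDerivAt q (fderiv ℝ q y) y :=
    ((hq.differentiableOn one_ne_zero).differentiableAt hUy).hasFDerivAt
  have HS : HasFDerivAt S (fderiv ℝ S y) y :=
    ((hS.differentiableOn one_ne_zero).differentiableAt hUy).hasFDerivAt
  have Hpt : HasFDerivAt pt (fderiv ℝ pt (v y, θ y)) (v y, θ y) :=
    ((hpt.differentiableOn one_ne_zero).differentiableAt hznhds).hasFDerivAt
  have Het : HasFDerivAt et (fderiv ℝ et (v y, θ y)) (v y, θ y) :=
    ((het.differentiableOn one_ne_zero).differentiableAt hznhds).hasFDerivAt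
  have Hst : HasFDerivAt st (fderiv ℝ st (v y, θ y)) (v y, θ y) :=
    ((hst.differentiableOn one_ne_zero).differentiableAt hznhds).hasFDerivAt
  have Hpair : HasFDerivAt (fun y' => ((v y', θ y') : ℝ × ℝ))
      ((fderiv ℝ v y).prod (fderiv ℝ θ y)) y := HasFDerivAt.prodMk Hv Hθ
  have HptC : HasFDerivAt (fun y' => pt (v y', θ y'))
      ((fderiv ℝ pt (v y, θ y)).comp ((fderiv ℝ v y).prod (fderiv ℝ θ y))) y :=
    Hpt.comp y Hpair
  have HetC : HasFDerivAt (fun y' => et (v y', θ y'))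
      ((fderiv ℝ et (v y, θ y)).comp ((fderiv ℝ v y).prod (fderiv ℝ θ y))) y :=
    Het.comp y Hpair
  have HstC : HasFDerivAt (fun y' => st (v y', θ y'))
      ((fderiv ℝ st (v y, θ y)).comp ((fderiv ℝ v y).prod (fderiv ℝ θ y))) y :=
    Hst.comp y Hpair
  -- HasFDerivAt for P
  have HPfd := (HptC.sub (hasFDerivAt_div' ((hasFDerivAt_sq Hq).const_mul τ1)
      (Hθ.const_mul (2 * κ)) h2κθ)).sub
      (hasFDerivAt_div' ((hasFDerivAt_sq HS).const_mul τ2) (hasFDerivAt_const (2 * μ) y) h2μ)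
  -- d2 of P
  have hd2P : d2 (fun y' => pt (v y', θ y') - τ1 * (q y') ^ 2 / (2 * κ * θ y')
      - τ2 * (S y') ^ 2 / (2 * μ)) y = _ := d2_eq HPfd
  simp only [compProdApply, ContinuousLinearMap.add_apply, ContinuousLinearMap.sub_apply,
    ContinuousLinearMap.smul_apply, ContinuousLinearMap.zero_apply, smul_eq_mul,
    fold_d1, fold_d2, mul_zero, smul_zero, add_zero, zero_add, neg_mul, mul_neg] at hd2P
  -- momentum scalar
  have Hm := hmom y hy
  rw [hd2P] at Hm
  -- d1 of the energy density
  have hd1E : d1 (fun y' => (et (v y', θ y') + τ1 * v y' * (q y') ^ 2 / (κ * θ y')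
      + τ2 * v y' * (S y') ^ 2 / (2 * μ)) + (u y') ^ 2 / 2) y = _ :=
    d1_eq (((HetC.add (hasFDerivAt_div' ((Hv.const_mul τ1).mul (hasFDerivAt_sq Hq))
        (Hθ.const_mul κ) hκθ)).add
        (hasFDerivAt_div' ((Hv.const_mul τ2).mul (hasFDerivAt_sq HS))
          (hasFDerivAt_const (2 * μ) y) h2μ)).add
        (hasFDerivAt_div' (hasFDerivAt_sq Hu) (hasFDerivAt_const (2 : ℝ) y) h20))
  simp only [compProdApply, ContinuousLinearMap.add_apply, ContinuousLinearMap.sub_apply,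
    ContinuousLinearMap.smul_apply, ContinuousLinearMap.zero_apply, smul_eq_mul,
    fold_d1, fold_d2, mul_zero, smul_zero, add_zero, zero_add, neg_mul, mul_neg, Pi.mul_apply] at hd1E
  -- d2 of u * P
  have hd2uP : d2 (fun y' => u y' * (pt (v y', θ y') - τ1 * (q y') ^ 2 / (2 * κ * θ y')
      - τ2 * (S y') ^ 2 / (2 * μ))) y = _ := d2_eq (Hu.mul HPfd)
  simp only [compProdApply, ContinuousLinearMap.add_apply, ContinuousLinearMap.sub_apply,
    ContinuousLinearMap.smul_apply, ContinuousLinearMap.zero_apply, smul_eq_mul,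
    fold_d1, fold_d2, mul_zero, smul_zero, add_zero, zero_add, neg_mul, mul_neg] at hd2uP
  -- d2 of u * S
  have hd2uS : d2 (fun y' => u y' * S y') y = _ := d2_eq (Hu.mul HS)
  simp only [ContinuousLinearMap.add_apply, ContinuousLinearMap.smul_apply, smul_eq_mul,
    fold_d1, fold_d2] at hd2uS
  -- energy scalar
  have He := henergy y hy
  rw [hd1E, hd2uP, hd2uS] at He
  -- d1 of entropy density
  have hd1G : d1 (fun y' => st (v y', θ y') + τ1 * v y' * (q y') ^ 2 / (2 * κ * (θ y') ^ 2)) y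
      = _ :=
    d1_eq (HstC.add (hasFDerivAt_div' ((Hv.const_mul τ1).mul (hasFDerivAt_sq Hq))
      ((hasFDerivAt_sq Hθ).const_mul (2 * κ)) h2κθ2))
  simp only [compProdApply, ContinuousLinearMap.add_apply, ContinuousLinearMap.sub_apply,
    ContinuousLinearMap.smul_apply, ContinuousLinearMap.zero_apply, smul_eq_mul,
    fold_d1, fold_d2, mul_zero, smul_zero, add_zero, zero_add, neg_mul, mul_neg] at hd1G
  -- d2 of q / θ
  have hd2qθ : d2 (fun y' => q y' / θ y') y = _ := d2_eq (hasFDerivAt_div' Hq Hθ hθ0)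
  simp only [ContinuousLinearMap.add_apply, ContinuousLinearMap.smul_apply, smul_eq_mul,
    fold_d1, fold_d2, neg_mul, mul_neg] at hd2qθ
  rw [hd1G, hd2qθ]
  -- remaining scalar hypotheses
  have Hc := hcattaneo y hy
  have Hx := hmaxwell y hy
  have H1 := hmass y hy
  have G1 : d1 st (v y, θ y) = d2 pt (v y, θ y) := hGibbs1 (v y, θ y) hvy hθy
  have G2 : d2 st (v y, θ y) = (1 / θ y) * d2 et (v y, θ y) := hGibbs2 (v y, θ y) hvy hθy
  have G3 : d1 et (v y, θ y) = θ y * d2 pt (v y, θ y) - pt (v y, θ y) :=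
    hGibbs3 (v y, θ y) hvy hθy
  linear_combination (norm := (field_simp; ring1))
    (1 / θ y) * He - (u y / θ y) * Hm - (v y * q y / (κ * (θ y) ^ 2)) * Hc
      - (S y * v y / (μ * θ y)) * Hx
      + (pt (v y, θ y) / θ y - τ1 * (q y) ^ 2 / (2 * κ * (θ y) ^ 2)
          - τ2 * (S y) ^ 2 / (2 * μ * θ y)) * H1
      + d1 v y * G1 + d1 θ y * G2 + (-(d1 v y / θ y)) * G3
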